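/- arXiv:math/0209347 — 3 statements merged into one kernel-verified Lean document; each statement's English description precedes it below -/
import Mathlib

section
/- Let f(z) = (1/2)·coth(z/2) − 1/z, extended by f(0) = 0. Then f is the logarithmic derivative of j(z) = sinh(z/2)/(z/2) (i.e. f = j'/j wherever j ≠ 0), f is an odd function, and f is analytic on the disc |z| < 2π. -/
/-- `j(z) = sinh(z/2)/(z/2)`, with `j(0) = 1`. -/
noncomputable def jfun (z : ℂ) : ℂ := if z = 0 then 1 else Complex.sinh (z / 2) / (z / 2)

/-- `f(z) = (1/2) coth(z/2) - 1/z`, extended by `f(0) = 0`,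
where `coth w = cosh w / sinh w`. -/
noncomputable def ffun (z : ℂ) : ℂ :=
  if z = 0 then 0
  else (1 / 2) * (Complex.cosh (z / 2) / Complex.sinh (z / 2)) - 1 / z

lemma jfun_eq (z : ℂ) : jfun z = dslope Complex.sinh 0 (z / 2) := by
  rcases eq_or_ne z 0 with rfl | hz
  · rw [zero_div, dslope_same, Complex.deriv_sinh, Complex.cosh_zero]
    simp [jfun]
  · have h2 : z / 2 ≠ 0 := by simpa using hz
    simp [jfun, hz, dslope, Function.update_of_ne h2, slope_def_field, div_eq_iff h2]

lemma analyticAt_sinh (z : ℂ) : AnalyticAt ℂ Complex.sinh z := by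
  rw [Complex.analyticAt_iff_eventually_differentiableAt]
  filter_upwards with w using Complex.differentiable_sinh w

lemma jfun_analyticAt (z : ℂ) : AnalyticAt ℂ jfun z := by
  have key : AnalyticAt ℂ (dslope Complex.sinh 0) (z / 2) := by
    rcases eq_or_ne z 0 with rfl | hz
    · rw [zero_div]
      obtain ⟨p, hp⟩ := analyticAt_sinh 0
      exact ⟨p.fslope, hp.has_fpower_series_dslope_fslope⟩
    · have h2 : z / 2 ≠ 0 := by simpa using hz
      have : AnalyticAt ℂ (fun w => Complex.sinh w / w) (z / 2) :=
        (analyticAt_sinh _).div analyticAt_id h2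
      apply this.congr
      filter_upwards [isOpen_ne.mem_nhds h2] with w hw
      simp [dslope, Function.update_of_ne hw, slope_def_field, div_eq_iff hw]
  have h1 : AnalyticAt ℂ (fun w : ℂ => w / 2) z :=
    analyticAt_id.div analyticAt_const two_ne_zero
  have h3 : AnalyticAt ℂ (dslope Complex.sinh 0 ∘ fun w : ℂ => w / 2) z := AnalyticAt.comp (f := fun w : ℂ => w / 2) (x := z) key h1
  exact h3.congr (Filter.Eventually.of_forall fun w => (jfun_eq w).symm)

lemma jfun_even (z : ℂ) : jfun (-z) = jfun z := by
  rcases eq_or_ne z 0 with rfl | hz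
  · simp
  · have : (-z : ℂ) ≠ 0 := neg_ne_zero.mpr hz
    simp [jfun, if_neg hz, if_neg this, neg_div, Complex.sinh_neg, div_neg, neg_neg]

lemma deriv_jfun_zero : deriv jfun 0 = 0 := by
  have h : deriv (fun z => jfun (-z)) 0 = deriv jfun 0 := by
    congr 1
    ext z
    exact jfun_even z
  rw [deriv_comp_neg] at h
  simp only [neg_zero] at h
  linear_combination (-1/2 : ℂ) * h

lemma hasDerivAt_jfun {z : ℂ} (hz : z ≠ 0) :
    HasDerivAt jfun ((Complex.cosh (z/2) * (1/2) * (z/2) - Complex.sinh (z/2) * (1/2)) / (z/2)^2) z := by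
  have h2 : z / 2 ≠ 0 := by simpa using hz
  have hs : HasDerivAt (fun w : ℂ => Complex.sinh (w / 2)) (Complex.cosh (z/2) * (1/2)) z := by
    simpa [Function.comp_def] using (Complex.hasDerivAt_sinh (z/2)).comp z ((hasDerivAt_id z).div_const 2)
  have hd : HasDerivAt (fun w : ℂ => w / 2) (1/2 : ℂ) z := by
    simpa using (hasDerivAt_id z).div_const 2
  have := hs.div hd h2
  apply this.congr_of_eventuallyEq
  filter_upwards [isOpen_ne.mem_nhds hz] with w hw
  simp [jfun, hw]

lemma part1 : ∀ z : ℂ, jfun z ≠ 0 → ffun z = deriv jfun z / jfun z := by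
  intro z hz
  rcases eq_or_ne z 0 with rfl | h0
  · simp [ffun, deriv_jfun_zero]
  · have h2 : z / 2 ≠ 0 := by simpa using h0
    have hsinh : Complex.sinh (z / 2) ≠ 0 := by
      intro h
      apply hz
      simp [jfun, h0, h]
    rw [(hasDerivAt_jfun h0).deriv]
    simp only [jfun, if_neg h0, ffun, if_neg h0]
    field_simp

lemma part2 : ∀ z : ℂ, ffun (-z) = - ffun z := by
  intro z
  rcases eq_or_ne z 0 with rfl | hz
  · simp [ffun]
  · have h : (-z : ℂ) ≠ 0 := neg_ne_zero.mpr hz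
    simp only [ffun, if_neg hz, if_neg h, neg_div, Complex.sinh_neg, Complex.cosh_neg]
    field_simp
    ring

lemma jfun_ne_zero {z : ℂ} (hz : z ∈ Metric.ball (0 : ℂ) (2 * Real.pi)) : jfun z ≠ 0 := by
  rcases eq_or_ne z 0 with rfl | h0
  · simp [jfun]
  · have h2 : z / 2 ≠ 0 := by simpa using h0
    have hsinh : Complex.sinh (z / 2) ≠ 0 := by
      intro h
      have hsin : Complex.sin (z / 2 * Complex.I) = 0 := by
        rw [Complex.sin_mul_I, h, zero_mul]
      obtain ⟨k, hk⟩ := Complex.sin_eq_zero_iff.mp hsin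
      have hk0 : k ≠ 0 := by
        rintro rfl
        simp at hk
        exact h0 hk
      have habs : ‖z‖ / 2 = |(k : ℝ)| * Real.pi := by
        have := congrArg (fun w : ℂ => ‖w‖) hk
        simpa [map_mul, map_div₀, Complex.norm_intCast, Complex.norm_real,
          abs_of_pos Real.pi_pos] using this
      have hk1 : (1 : ℝ) ≤ |(k : ℝ)| := by
        rw [← Int.cast_abs]
        exact_mod_cast Int.one_le_abs hk0
      have hlt : ‖z‖ < 2 * Real.pi := by
        simpa [Complex.dist_eq] using hz
      nlinarith [Real.pi_pos]
    simp [jfun, h0, div_ne_zero hsinh h2]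

/-- `f` is the logarithmic derivative of `j` (wherever `j ≠ 0`), `f` is odd, and
`f` is analytic on the disc `|z| < 2π`. -/
theorem ffun_logDeriv_odd_analytic :
    (∀ z : ℂ, jfun z ≠ 0 → ffun z = deriv jfun z / jfun z) ∧
    (∀ z : ℂ, ffun (-z) = - ffun z) ∧
    AnalyticOnNhd ℂ ffun (Metric.ball (0 : ℂ) (2 * Real.pi)) := by
  refine ⟨part1, part2, ?_⟩
  intro z hz
  have hj : AnalyticAt ℂ jfun z := jfun_analyticAt z
  have hd : AnalyticAt ℂ (deriv jfun) z := by
    have : AnalyticOnNhd ℂ jfun Set.univ := fun w _ => jfun_analyticAt w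
    exact this.deriv z (Set.mem_univ z)
  have hjz : jfun z ≠ 0 := jfun_ne_zero hz
  refine ((hd.div hj hjz).congr ?_)
  have hcont : ContinuousAt jfun z := hj.continuousAt
  have hopen : ∀ᶠ w in nhds z, jfun w ≠ 0 := hcont.eventually_ne hjz
  filter_upwards [hopen] with w hw
  exact (part1 w hw).symm
end

section
/- For any Lie algebra g over a field k and any linear map φ : g → E into a vector space E, the element λ^g − Σ_a e^a ⊗ φ(e_a) of C^∞(g*) ⊗ Λg* ⊗ ΛE (more precisely, the polynomial-coefficient version) is closed under the differential d^g + Σ_a (∂/∂μ_a) ⊗ φ(e_a), where d^g is the Chevalley–Eilenberg differential of g extended to coefficients in ΛE and λ^g : g* → Λ²g* is the map dual to the Lie bracket. -/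
set_option maxHeartbeats 1000000

lemma cyc3_sum_eq_zero {α M : Type*} [DecidableEq α] [AddCommMonoid M]
    (g : α → α) (hg : ∀ a, g (g (g a)) = a) (f : α → M)
    (h0 : ∀ a, g a = a → f a = 0)
    (hcyc : ∀ a, f a + f (g a) + f (g (g a)) = 0) :
    ∀ s : Finset α, (∀ a ∈ s, g a ∈ s) → ∑ a ∈ s, f a = 0 := by
  intro s
  induction s using Finset.strongInduction with
  | _ s ih =>
    intro hs
    rcases s.eq_empty_or_nonempty with rfl | ⟨a, ha⟩
    · simp
    · by_cases hfix : g a = a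
      · have h1 : ∑ x ∈ s.erase a, f x = 0 := by
          refine ih (s.erase a) (Finset.erase_ssubset ha) ?_
          intro x hx
          have hxs := Finset.mem_of_mem_erase hx
          have hxa := Finset.ne_of_mem_erase hx
          refine Finset.mem_erase.mpr ⟨?_, hs x hxs⟩
          intro hga
          exact hxa ((hg x).symm.trans (by rw [hga, hfix, hfix]))
        rw [← Finset.add_sum_erase s f ha, h0 a hfix, h1, add_zero]
      · have hga : g a ∈ s := hs a ha
        have hgga : g (g a) ∈ s := hs _ hga
        have h1 : a ≠ g a := fun h => hfix h.symm
        have h2 : g a ≠ g (g a) := by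
          intro h
          have h' := congrArg (fun z => g (g z)) h
          simp only [hg a, hg (g a)] at h'
          exact h1 h'
        have h3 : a ≠ g (g a) := by
          intro h
          exact hfix ((congrArg g h).trans (hg a))
        have husub : ({a, g a, g (g a)} : Finset α) ⊆ s := by
          intro x hx
          simp only [Finset.mem_insert, Finset.mem_singleton] at hx
          rcases hx with rfl | rfl | rfl <;> assumption
        have hsum_u : ∑ x ∈ ({a, g a, g (g a)} : Finset α), f x = 0 := by
          rw [Finset.sum_insert (by simp [h1, h3]),
            Finset.sum_insert (by simp [h2]), Finset.sum_singleton, ← add_assoc]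
          exact hcyc a
        have hdiff : ∑ x ∈ s \ {a, g a, g (g a)}, f x = 0 := by
          refine ih _ ((Finset.ssubset_iff_of_subset Finset.sdiff_subset).mpr
            ⟨a, ha, by simp⟩) ?_
          intro x hx
          obtain ⟨hxs, hxu⟩ := Finset.mem_sdiff.mp hx
          refine Finset.mem_sdiff.mpr ⟨hs x hxs, ?_⟩
          intro hgu
          apply hxu
          simp only [Finset.mem_insert, Finset.mem_singleton] at hgu ⊢
          rcases hgu with h | h | h
          · right; right
            exact ((hg x).symm.trans (by rw [h]))
          · left
            have h' := congrArg (fun z => g (g z)) h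
            simp only [hg] at h'
            exact h'
          · right; left
            have h' := congrArg (fun z => g (g z)) h
            simp only [hg] at h'
            exact h'
        rw [← Finset.sum_sdiff husub, hsum_u, hdiff, add_zero]

lemma triple_cyc_sum_zero {ι M : Type*} [Fintype ι] [DecidableEq ι] [AddCommMonoid M]
    (f : ι → ι → ι → M) (h0 : ∀ p, f p p p = 0)
    (hcyc : ∀ p q r, f p q r + f q r p + f r p q = 0) :
    ∑ p, ∑ q, ∑ r, f p q r = 0 := by
  have key := cyc3_sum_eq_zero (g := fun t : ι × ι × ι => (t.2.1, t.2.2, t.1))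
    (fun t => rfl) (f := fun t => f t.1 t.2.1 t.2.2)
    (fun t ht => by
      have h1 : t.2.1 = t.1 := congrArg Prod.fst ht
      have h2 : t.2.2 = t.2.1 := congrArg (fun x => x.2.1) ht
      simp only [h2, h1]
      exact h0 t.1)
    (fun t => hcyc t.1 t.2.1 t.2.2)
    Finset.univ (fun a _ => Finset.mem_univ _)
  calc ∑ p, ∑ q, ∑ r, f p q r = ∑ t : ι × ι × ι, f t.1 t.2.1 t.2.2 := by
        rw [Fintype.sum_prod_type]
        refine Finset.sum_congr rfl fun p _ => ?_
        rw [Fintype.sum_prod_type]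
    _ = 0 := key

lemma contract_left {k gl ι : Type*} [Field k] [Fintype ι] [DecidableEq ι]
    [LieRing gl] [LieAlgebra k gl] (b : Module.Basis ι k gl) (μ : Module.Dual k gl)
    (x y : gl) : ∑ a, (b.dualBasis a) x * μ ⁅b a, y⁆ = μ ⁅x, y⁆ := by
  let L : gl →ₗ[k] k :=
    { toFun := fun z => μ ⁅z, y⁆
      map_add' := fun u v => by simp [add_lie]
      map_smul' := fun t u => by simp [smul_lie] }
  calc ∑ a, (b.dualBasis a) x * μ ⁅b a, y⁆ = ∑ a, b.repr x a • L (b a) := by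
        simp [Module.Basis.dualBasis_apply, L, smul_eq_mul]
    _ = L (∑ a, b.repr x a • b a) := by rw [map_sum]; simp
    _ = μ ⁅x, y⁆ := by rw [b.sum_repr x]; rfl

lemma contract_right {k gl ι : Type*} [Field k] [Fintype ι] [DecidableEq ι]
    [LieRing gl] [LieAlgebra k gl] (b : Module.Basis ι k gl) (μ : Module.Dual k gl)
    (x y : gl) : ∑ a, (b.dualBasis a) x * μ ⁅y, b a⁆ = μ ⁅y, x⁆ := by
  let L : gl →ₗ[k] k :=
    { toFun := fun z => μ ⁅y, z⁆
      map_add' := fun u v => by simp [lie_add]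
      map_smul' := fun t u => by simp [lie_smul] }
  calc ∑ a, (b.dualBasis a) x * μ ⁅y, b a⁆ = ∑ a, b.repr x a • L (b a) := by
        simp [Module.Basis.dualBasis_apply, L, smul_eq_mul]
    _ = L (∑ a, b.repr x a • b a) := by rw [map_sum]; simp
    _ = μ ⁅y, x⁆ := by rw [b.sum_repr x]; rfl

lemma ext_anticomm {k V : Type*} [Field k] [AddCommGroup V] [Module k V] (x y : V) :
    ExteriorAlgebra.ι k x * ExteriorAlgebra.ι k y
      = -(ExteriorAlgebra.ι k y * ExteriorAlgebra.ι k x) :=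
  eq_neg_of_add_eq_zero_left (ExteriorAlgebra.ι_add_mul_swap x y)

lemma ext_cyc {k V : Type*} [Field k] [AddCommGroup V] [Module k V] (x y z : V) :
    ExteriorAlgebra.ι k x * ExteriorAlgebra.ι k y * ExteriorAlgebra.ι k z
      = ExteriorAlgebra.ι k y * ExteriorAlgebra.ι k z * ExteriorAlgebra.ι k x := by
  rw [ext_anticomm x y, neg_mul, mul_assoc, ext_anticomm x z, mul_neg, neg_neg,
    ← mul_assoc]
lemma jac3 {L : Type*} [LieRing L] (x y z : L) :
    ⁅⁅x, y⁆, z⁆ + ⁅⁅y, z⁆, x⁆ + ⁅⁅z, x⁆, y⁆ = 0 := by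
  have h := lie_jacobi x y z
  rw [← lie_skew ⁅x, y⁆ z, ← lie_skew ⁅y, z⁆ x, ← lie_skew ⁅z, x⁆ y,
    show -⁅z, ⁅x, y⁆⁆ + -⁅x, ⁅y, z⁆⁆ + -⁅y, ⁅z, x⁆⁆
      = -(⁅x, ⁅y, z⁆⁆ + ⁅y, ⁅z, x⁆⁆ + ⁅z, ⁅x, y⁆⁆) from by abel, h, neg_zero]
/-- Let `g` be a finite-dimensional Lie algebra over a field `k` with basis `e_a`, dual
basis `e^a`, and `φ : g → E` a linear map.  Work in `Λ(g* × E)` (realizing `Λg* ⊗ ΛE`),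
and let `λ^g(μ) = −(1/2) Σ_{a,c} μ([e_a,e_c]) e^a ∧ e^c`.  For any odd derivation `D`
with `D(μ) = λ^g(μ)` for `μ ∈ g*` and `D = 0` on `E`, the element
`λ^g − Σ_a e^a ∧ φ(e_a)` (an affine function of `μ`) is closed under the differential
`D + Σ_a (∂/∂μ_a) φ(e_a)`; since the element is affine in `μ`, the derivative term is
`Σ_a λ^g(e^a) ∧ φ(e_a)`. -/
theorem lambda_element_closed {k g E ι : Type*} [Field k] [Fintype ι] [DecidableEq ι]
    [LieRing g] [LieAlgebra k g] [AddCommGroup E] [Module k E]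
    (b : Module.Basis ι k g) (φ : g →ₗ[k] E)
    (lam : Module.Dual k g → ExteriorAlgebra k (Module.Dual k g × E))
    (hlam : ∀ μ : Module.Dual k g,
      lam μ = (-(2 : k)⁻¹) • ∑ a, ∑ c, (μ ⁅b a, b c⁆) •
        (ExteriorAlgebra.ι k ((b.dualBasis a, 0) : Module.Dual k g × E) *
          ExteriorAlgebra.ι k ((b.dualBasis c, 0) : Module.Dual k g × E)))
    (D : ExteriorAlgebra k (Module.Dual k g × E) →ₗ[k]
        ExteriorAlgebra k (Module.Dual k g × E))
    (hD1 : D 1 = 0)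
    (hDμ : ∀ μ : Module.Dual k g,
      D (ExteriorAlgebra.ι k ((μ, 0) : Module.Dual k g × E)) = lam μ)
    (hDe : ∀ e : E, D (ExteriorAlgebra.ι k ((0, e) : Module.Dual k g × E)) = 0)
    (hLeib : ∀ (w : Module.Dual k g × E) (x : ExteriorAlgebra k (Module.Dual k g × E)),
      D (ExteriorAlgebra.ι k w * x) =
        D (ExteriorAlgebra.ι k w) * x - ExteriorAlgebra.ι k w * D x) :
    ∀ μ : Module.Dual k g,
      D (lam μ - ∑ a, ExteriorAlgebra.ι k ((b.dualBasis a, 0) : Module.Dual k g × E) *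
            ExteriorAlgebra.ι k ((0, φ (b a)) : Module.Dual k g × E))
        + ∑ a, lam (b.dualBasis a) *
            ExteriorAlgebra.ι k ((0, φ (b a)) : Module.Dual k g × E) = 0 := by
  intro μ
  have hstep : D (∑ a, ExteriorAlgebra.ι k ((b.dualBasis a, 0) : Module.Dual k g × E) *
      ExteriorAlgebra.ι k ((0, φ (b a)) : Module.Dual k g × E))
      = ∑ a, lam (b.dualBasis a) *
          ExteriorAlgebra.ι k ((0, φ (b a)) : Module.Dual k g × E) := by
    rw [map_sum]
    exact Finset.sum_congr rfl fun a _ => by rw [hLeib, hDμ, hDe, mul_zero, sub_zero]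
  rw [map_sub, hstep, sub_add_cancel]
  -- now: D (lam μ) = 0
  have W1 : ∑ a : ι, ∑ c : ι, μ ⁅b a, b c⁆ •
      (lam (b.dualBasis a) * ExteriorAlgebra.ι k ((b.dualBasis c, 0) : Module.Dual k g × E)) = 0 := by
    simp only [hlam, smul_mul_assoc, Finset.sum_mul, Finset.smul_sum, smul_smul]
    rw [Finset.sum_comm]
    have hre : ∀ c : ι, ∑ a : ι, ∑ p : ι, ∑ q : ι,
        (μ ⁅b a, b c⁆ * (-(2:k)⁻¹ * (b.dualBasis a) ⁅b p, b q⁆)) •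
          (ExteriorAlgebra.ι k ((b.dualBasis p, 0) : Module.Dual k g × E) *
            ExteriorAlgebra.ι k ((b.dualBasis q, 0) : Module.Dual k g × E) *
            ExteriorAlgebra.ι k ((b.dualBasis c, 0) : Module.Dual k g × E))
        = ∑ p : ι, ∑ q : ι,
          (-(2:k)⁻¹ * μ ⁅⁅b p, b q⁆, b c⁆) •
          (ExteriorAlgebra.ι k ((b.dualBasis p, 0) : Module.Dual k g × E) *
            ExteriorAlgebra.ι k ((b.dualBasis q, 0) : Module.Dual k g × E) *
            ExteriorAlgebra.ι k ((b.dualBasis c, 0) : Module.Dual k g × E)) := by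
      intro c
      rw [Finset.sum_comm]
      refine Finset.sum_congr rfl fun p _ => ?_
      rw [Finset.sum_comm]
      refine Finset.sum_congr rfl fun q _ => ?_
      rw [← Finset.sum_smul]
      congr 1
      calc ∑ a : ι, μ ⁅b a, b c⁆ * (-(2:k)⁻¹ * (b.dualBasis a) ⁅b p, b q⁆)
          = -(2:k)⁻¹ * ∑ a : ι, (b.dualBasis a) ⁅b p, b q⁆ * μ ⁅b a, b c⁆ := by
            rw [Finset.mul_sum]
            exact Finset.sum_congr rfl fun a _ => by ring
        _ = -(2:k)⁻¹ * μ ⁅⁅b p, b q⁆, b c⁆ := by rw [contract_left]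
    simp only [hre]
    refine triple_cyc_sum_zero (f := fun x y z : ι =>
      (-(2:k)⁻¹ * μ ⁅⁅b y, b z⁆, b x⁆) •
        (ExteriorAlgebra.ι k ((b.dualBasis y, 0) : Module.Dual k g × E) *
          ExteriorAlgebra.ι k ((b.dualBasis z, 0) : Module.Dual k g × E) *
          ExteriorAlgebra.ι k ((b.dualBasis x, 0) : Module.Dual k g × E))) ?_ ?_
    · intro p
      simp [ExteriorAlgebra.ι_sq_zero]
    · intro x y z
      beta_reduce
      rw [ext_cyc ((b.dualBasis z, 0) : Module.Dual k g × E) (b.dualBasis x, 0)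
          (b.dualBasis y, 0),
        ext_cyc ((b.dualBasis x, 0) : Module.Dual k g × E) (b.dualBasis y, 0)
          (b.dualBasis z, 0)]
      rw [← add_smul, ← add_smul, ← mul_add, ← mul_add, ← map_add, ← map_add,
        jac3, map_zero, mul_zero, zero_smul]
  have W2 : ∑ a : ι, ∑ c : ι, μ ⁅b a, b c⁆ •
      (ExteriorAlgebra.ι k ((b.dualBasis a, 0) : Module.Dual k g × E) *
        lam (b.dualBasis c)) = 0 := by
    simp only [hlam, mul_smul_comm, Finset.mul_sum, Finset.smul_sum, smul_smul]
    have hre : ∀ a : ι, ∑ c : ι, ∑ p : ι, ∑ q : ι,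
        (μ ⁅b a, b c⁆ * (-(2:k)⁻¹ * (b.dualBasis c) ⁅b p, b q⁆)) •
          (ExteriorAlgebra.ι k ((b.dualBasis a, 0) : Module.Dual k g × E) *
            (ExteriorAlgebra.ι k ((b.dualBasis p, 0) : Module.Dual k g × E) *
              ExteriorAlgebra.ι k ((b.dualBasis q, 0) : Module.Dual k g × E)))
        = ∑ p : ι, ∑ q : ι,
          (-(2:k)⁻¹ * μ ⁅b a, ⁅b p, b q⁆⁆) •
          (ExteriorAlgebra.ι k ((b.dualBasis a, 0) : Module.Dual k g × E) *
            (ExteriorAlgebra.ι k ((b.dualBasis p, 0) : Module.Dual k g × E) *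
              ExteriorAlgebra.ι k ((b.dualBasis q, 0) : Module.Dual k g × E))) := by
      intro a
      rw [Finset.sum_comm]
      refine Finset.sum_congr rfl fun p _ => ?_
      rw [Finset.sum_comm]
      refine Finset.sum_congr rfl fun q _ => ?_
      rw [← Finset.sum_smul]
      congr 1
      calc ∑ c : ι, μ ⁅b a, b c⁆ * (-(2:k)⁻¹ * (b.dualBasis c) ⁅b p, b q⁆)
          = -(2:k)⁻¹ * ∑ c : ι, (b.dualBasis c) ⁅b p, b q⁆ * μ ⁅b a, b c⁆ := by
            rw [Finset.mul_sum]
            exact Finset.sum_congr rfl fun c _ => by ring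
        _ = -(2:k)⁻¹ * μ ⁅b a, ⁅b p, b q⁆⁆ := by rw [contract_right]
    simp only [hre]
    refine triple_cyc_sum_zero (f := fun x y z : ι =>
      (-(2:k)⁻¹ * μ ⁅b x, ⁅b y, b z⁆⁆) •
        (ExteriorAlgebra.ι k ((b.dualBasis x, 0) : Module.Dual k g × E) *
          (ExteriorAlgebra.ι k ((b.dualBasis y, 0) : Module.Dual k g × E) *
            ExteriorAlgebra.ι k ((b.dualBasis z, 0) : Module.Dual k g × E)))) ?_ ?_
    · intro p
      simp [ExteriorAlgebra.ι_sq_zero]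
    · intro x y z
      beta_reduce
      have c1 : ExteriorAlgebra.ι k ((b.dualBasis y, 0) : Module.Dual k g × E) *
          (ExteriorAlgebra.ι k ((b.dualBasis z, 0) : Module.Dual k g × E) *
            ExteriorAlgebra.ι k ((b.dualBasis x, 0) : Module.Dual k g × E))
          = ExteriorAlgebra.ι k ((b.dualBasis x, 0) : Module.Dual k g × E) *
          (ExteriorAlgebra.ι k ((b.dualBasis y, 0) : Module.Dual k g × E) *
            ExteriorAlgebra.ι k ((b.dualBasis z, 0) : Module.Dual k g × E)) := by
        rw [← mul_assoc, ← mul_assoc, ext_cyc ((b.dualBasis x, 0) : Module.Dual k g × E)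
          (b.dualBasis y, 0) (b.dualBasis z, 0)]
      have c2 : ExteriorAlgebra.ι k ((b.dualBasis z, 0) : Module.Dual k g × E) *
          (ExteriorAlgebra.ι k ((b.dualBasis x, 0) : Module.Dual k g × E) *
            ExteriorAlgebra.ι k ((b.dualBasis y, 0) : Module.Dual k g × E))
          = ExteriorAlgebra.ι k ((b.dualBasis x, 0) : Module.Dual k g × E) *
          (ExteriorAlgebra.ι k ((b.dualBasis y, 0) : Module.Dual k g × E) *
            ExteriorAlgebra.ι k ((b.dualBasis z, 0) : Module.Dual k g × E)) := by
        rw [← mul_assoc, ← mul_assoc, ext_cyc ((b.dualBasis x, 0) : Module.Dual k g × E)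
          (b.dualBasis y, 0) (b.dualBasis z, 0),
          ext_cyc ((b.dualBasis y, 0) : Module.Dual k g × E)
          (b.dualBasis z, 0) (b.dualBasis x, 0)]
      rw [c1, c2, ← add_smul, ← add_smul, ← mul_add, ← mul_add, ← map_add, ← map_add,
        lie_jacobi, map_zero, mul_zero, zero_smul]
  rw [hlam μ, map_smul, map_sum]
  simp only [map_sum, map_smul, hLeib, hDμ]
  simp only [smul_sub, Finset.sum_sub_distrib]
  rw [W1, W2]; simp
end

section
/- If λ ∈ Λ²V is a non-degenerate bivector on a finite-dimensional vector space V (i.e. the associated map V* → V is invertible), then for every α ∈ ΛV there is a unique β ∈ ΛV with α = ι_β exp(λ), where ι_β denotes contraction of ΛV* ≅ ΛV (via a fixed identification) against exp(λ); i.e. the operator β ↦ ι_β exp(λ) is a linear isomorphism of ΛV. -/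
set_option linter.unusedSectionVars false
set_option maxHeartbeats 1000000


section
variable {V : Type*} [AddCommGroup V] [Module ℝ V]

/-- The extension of contraction (via the identification `V ≅ V*` by `B`) to an algebra
morphism `ΛV → End(ΛV)`, `β ↦ ι_β`. -/
noncomputable def contractionMap (B : LinearMap.BilinForm ℝ V) :
    ExteriorAlgebra ℝ V →ₐ[ℝ] Module.End ℝ (ExteriorAlgebra ℝ V) :=
  CliffordAlgebra.lift (0 : QuadraticForm ℝ V)
    ⟨(CliffordAlgebra.contractLeft (Q := (0 : QuadraticForm ℝ V))).comp B,
      fun m => by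
        ext x
        simp [Module.End.mul_apply, CliffordAlgebra.contractLeft_contractLeft]⟩

/-- Truncated (hence genuine, by nilpotency) exponential in `ΛV`. -/
noncomputable def expExt (N : ℕ) (x : ExteriorAlgebra ℝ V) : ExteriorAlgebra ℝ V :=
  ∑ n ∈ Finset.range (N + 1), ((n.factorial : ℝ)⁻¹) • x ^ n

section Aux
variable {ι : Type*} [Fintype ι] [DecidableEq ι]

open ExteriorAlgebra

lemma myProdZero (bs : Module.Basis ι ℝ V) {l : List ι} (hl : Fintype.card ι < l.length) :
    (l.map fun a => ExteriorAlgebra.ι ℝ (bs a)).prod = 0 := by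
  have hnd : ¬ l.Nodup := by
    intro h
    exact absurd h.length_le_card (not_le.2 hl)
  have heq : (l.map fun a => ExteriorAlgebra.ι ℝ (bs a)).prod
      = ExteriorAlgebra.ιMulti ℝ l.length (fun i => bs (l.get i)) := by
    rw [ExteriorAlgebra.ιMulti_apply]
    congr 1
    conv_lhs => rw [← List.ofFn_get l]
    rw [List.map_ofFn]
    rfl
  rw [heq]
  refine AlternatingMap.map_eq_zero_of_not_injective _ _ ?_
  intro hinj
  refine hnd (List.nodup_iff_injective_get.2 fun i j hij => ?_)
  exact hinj (congrArg bs hij)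

/-- span of monomials of length `k` in basis generators -/
noncomputable def Wk (bs : Module.Basis ι ℝ V) (k : ℕ) : Submodule ℝ (ExteriorAlgebra ℝ V) :=
  Submodule.span ℝ {x | ∃ l : List ι, l.length = k ∧ (l.map fun a => ExteriorAlgebra.ι ℝ (bs a)).prod = x}

set_option linter.unusedSectionVars false in
lemma Wk_mul {bs : Module.Basis ι ℝ V} {j k : ℕ} {x y : ExteriorAlgebra ℝ V}
    (hx : x ∈ Wk bs j) (hy : y ∈ Wk bs k) : x * y ∈ Wk bs (j + k) := by
  have h : Wk bs j * Wk bs k ≤ Wk bs (j + k) := by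
    rw [Wk, Wk, Submodule.span_mul_span]
    refine Submodule.span_le.2 ?_
    rintro z ⟨s, ⟨l₁, hl₁, rfl⟩, t, ⟨l₂, hl₂, rfl⟩, rfl⟩
    exact Submodule.subset_span ⟨l₁ ++ l₂, by simp [hl₁, hl₂], by simp⟩
  exact h (Submodule.mul_mem_mul hx hy)

lemma Wk_eq_bot (bs : Module.Basis ι ℝ V) {k : ℕ} (hk : Fintype.card ι < k) : Wk bs k = ⊥ := by
  rw [Wk, Submodule.span_eq_bot]
  rintro x ⟨l, hl, rfl⟩
  exact myProdZero bs (hl ▸ hk)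



variable {V : Type*} [AddCommGroup V] [Module ℝ V]
variable {ι : Type*} [Fintype ι] [DecidableEq ι]

open ExteriorAlgebra CliffordAlgebra

noncomputable def lamB (bs : Module.Basis ι ℝ V) (L : Matrix ι ι ℝ) : ExteriorAlgebra ℝ V :=
  (2 : ℝ)⁻¹ • ∑ a, ∑ b, L a b • (ExteriorAlgebra.ι ℝ (bs a) * ExteriorAlgebra.ι ℝ (bs b))

lemma my_swap (x y : V) : ExteriorAlgebra.ι ℝ x * ExteriorAlgebra.ι ℝ y
    = -(ExteriorAlgebra.ι ℝ y * ExteriorAlgebra.ι ℝ x) :=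
  eq_neg_of_add_eq_zero_left (ExteriorAlgebra.ι_add_mul_swap x y)

lemma comm_ι_lam (bs : Module.Basis ι ℝ V) (L : Matrix ι ι ℝ) (w : V) :
    ExteriorAlgebra.ι ℝ w * lamB bs L = lamB bs L * ExteriorAlgebra.ι ℝ w := by
  have key : ∀ a b : V, ExteriorAlgebra.ι ℝ w * (ExteriorAlgebra.ι ℝ a * ExteriorAlgebra.ι ℝ b)
      = (ExteriorAlgebra.ι ℝ a * ExteriorAlgebra.ι ℝ b) * ExteriorAlgebra.ι ℝ w := by
    intro a b
    rw [← mul_assoc, my_swap w a, neg_mul, mul_assoc, my_swap w b, mul_neg, neg_neg, ← mul_assoc]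
  simp only [lamB, mul_smul_comm, smul_mul_assoc, Finset.mul_sum, Finset.sum_mul]
  refine congrArg _ (Finset.sum_congr rfl fun a _ => Finset.sum_congr rfl fun b _ => ?_)
  rw [key]

noncomputable def mvec (bs : Module.Basis ι ℝ V) (L : Matrix ι ι ℝ) (α : Module.Dual ℝ V) : V :=
  ∑ b, (∑ a, L a b * α (bs a)) • bs b

lemma d_mono (α : Module.Dual ℝ V) (a b : V) (x : ExteriorAlgebra ℝ V) :
    contractLeft (Q := (0 : QuadraticForm ℝ V)) α (ExteriorAlgebra.ι ℝ a * ExteriorAlgebra.ι ℝ b * x)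
      = α a • (ExteriorAlgebra.ι ℝ b * x) - α b • (ExteriorAlgebra.ι ℝ a * x)
        + ExteriorAlgebra.ι ℝ a * ExteriorAlgebra.ι ℝ b
          * contractLeft (Q := (0 : QuadraticForm ℝ V)) α x := by
  rw [mul_assoc, contractLeft_ι_mul, contractLeft_ι_mul, mul_sub, mul_smul_comm, mul_assoc]
  abel

lemma d_lam_mul (bs : Module.Basis ι ℝ V) (L : Matrix ι ι ℝ) (hL : L.transpose = -L)
    (α : Module.Dual ℝ V) (x : ExteriorAlgebra ℝ V) :
    contractLeft (Q := (0 : QuadraticForm ℝ V)) α (lamB bs L * x)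
      = ExteriorAlgebra.ι ℝ (mvec bs L α) * x
        + lamB bs L * contractLeft (Q := (0 : QuadraticForm ℝ V)) α x := by
  have hLs : ∀ a b, L a b = -L b a := by
    intro a b
    have h := congrFun (congrFun hL b) a
    simp only [Matrix.transpose_apply, Matrix.neg_apply] at h
    linarith
  set d := contractLeft (Q := (0 : QuadraticForm ℝ V)) α with hd
  set S1 := ∑ a, ∑ b, L a b • (α (bs a) • (ExteriorAlgebra.ι ℝ (bs b) * x)) with hS1
  set S2 := ∑ a, ∑ b, L a b • (α (bs b) • (ExteriorAlgebra.ι ℝ (bs a) * x)) with hS2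
  set S3 := ∑ a, ∑ b, L a b • (ExteriorAlgebra.ι ℝ (bs a) * ExteriorAlgebra.ι ℝ (bs b) * d x)
    with hS3
  have hleft : d (lamB bs L * x) = (2:ℝ)⁻¹ • (S1 - S2 + S3) := by
    rw [lamB, smul_mul_assoc, map_smul, Finset.sum_mul, map_sum]
    congr 1
    rw [hS1, hS2, hS3, ← Finset.sum_sub_distrib, ← Finset.sum_add_distrib]
    refine Finset.sum_congr rfl fun a _ => ?_
    rw [Finset.sum_mul, map_sum, ← Finset.sum_sub_distrib, ← Finset.sum_add_distrib]
    refine Finset.sum_congr rfl fun b _ => ?_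
    rw [smul_mul_assoc, map_smul, d_mono, ← smul_sub, ← smul_add]
  have hS21 : S2 = -S1 := by
    calc S2 = ∑ b, ∑ a, L a b • α (bs b) • (ExteriorAlgebra.ι ℝ (bs a) * x) :=
          Finset.sum_comm
      _ = ∑ a, ∑ b, -(L a b • α (bs a) • (ExteriorAlgebra.ι ℝ (bs b) * x)) := by
          refine Finset.sum_congr rfl fun a _ => Finset.sum_congr rfl fun b _ => ?_
          rw [hLs b a, neg_smul]
      _ = -S1 := by simp only [Finset.sum_neg_distrib, hS1]
  have hS1' : (2:ℝ)⁻¹ • (S1 - S2 + S3) = S1 + (2:ℝ)⁻¹ • S3 := by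
    rw [hS21, sub_neg_eq_add, smul_add]
    congr 1
    rw [← two_smul ℝ S1, smul_smul]
    norm_num
  have hmv : ExteriorAlgebra.ι ℝ (mvec bs L α) * x = S1 := by
    rw [mvec, map_sum, Finset.sum_mul, hS1, Finset.sum_comm]
    refine Finset.sum_congr rfl fun b _ => ?_
    rw [map_smul, smul_mul_assoc, Finset.sum_smul]
    exact Finset.sum_congr rfl fun a _ => (mul_smul _ _ _)
  have hS3' : (2:ℝ)⁻¹ • S3 = lamB bs L * d x := by
    rw [lamB, smul_mul_assoc]
    congr 1
    rw [hS3, Finset.sum_mul]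
    refine Finset.sum_congr rfl fun a _ => ?_
    rw [Finset.sum_mul]
    exact Finset.sum_congr rfl fun b _ => (smul_mul_assoc _ _ _).symm
  rw [hleft, hS1', hS3', hmv]



lemma lamB_mem (bs : Module.Basis ι ℝ V) (L : Matrix ι ι ℝ) : lamB bs L ∈ Wk bs 2 := by
  refine Submodule.smul_mem _ _ (Submodule.sum_mem _ fun a _ => Submodule.sum_mem _ fun b _ =>
    Submodule.smul_mem _ _ (Submodule.subset_span ⟨[a, b], rfl, ?_⟩))
  simp [List.prod_cons]

lemma ι_mem_Wk_one (bs : Module.Basis ι ℝ V) (w : V) : ExteriorAlgebra.ι ℝ w ∈ Wk bs 1 := by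
  rw [← Module.Basis.sum_repr bs w, map_sum]
  refine Submodule.sum_mem _ fun a _ => ?_
  rw [map_smul]
  refine Submodule.smul_mem _ _ (Submodule.subset_span ⟨[a], rfl, ?_⟩)
  simp

lemma lamB_pow_mem (bs : Module.Basis ι ℝ V) (L : Matrix ι ι ℝ) (n : ℕ) :
    lamB bs L ^ n ∈ Wk bs (2 * n) := by
  induction n with
  | zero => exact Submodule.subset_span ⟨[], rfl, by simp⟩
  | succ n ih =>
      have h2 := Wk_mul ih (lamB_mem bs L)
      rw [pow_succ, show 2 * (n + 1) = 2 * n + 2 by ring]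
      exact h2

lemma lamB_pow_zero (bs : Module.Basis ι ℝ V) (L : Matrix ι ι ℝ) {n : ℕ} (hn : Fintype.card ι < 2 * n) :
    lamB bs L ^ n = 0 := by
  have := lamB_pow_mem bs L n
  rw [Wk_eq_bot bs hn] at this
  simpa using this

lemma ι_mul_lamB_pow_zero (bs : Module.Basis ι ℝ V) (L : Matrix ι ι ℝ) (w : V) {n : ℕ}
    (hn : Fintype.card ι < 1 + 2 * n) :
    ExteriorAlgebra.ι ℝ w * lamB bs L ^ n = 0 := by
  have := Wk_mul (ι_mem_Wk_one bs w) (lamB_pow_mem bs L n)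
  rw [Wk_eq_bot bs hn] at this
  simpa using this


lemma d_lam_pow (bs : Module.Basis ι ℝ V) (L : Matrix ι ι ℝ) (hL : L.transpose = -L)
    (α : Module.Dual ℝ V) (n : ℕ) :
    contractLeft (Q := (0 : QuadraticForm ℝ V)) α (lamB bs L ^ (n + 1))
      = ((n : ℝ) + 1) • (ExteriorAlgebra.ι ℝ (mvec bs L α) * lamB bs L ^ n) := by
  induction n with
  | zero =>
      rw [pow_one, show lamB bs L = lamB bs L * 1 by rw [mul_one], d_lam_mul bs L hL,
        contractLeft_one, mul_zero, add_zero, pow_zero]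
      norm_num
  | succ n ih =>
      rw [show n + 1 + 1 = (n + 1) + 1 by rfl, pow_succ' (lamB bs L) (n + 1),
        d_lam_mul bs L hL, ih, mul_smul_comm, ← mul_assoc, ← comm_ι_lam, mul_assoc,
        ← pow_succ']
      push_cast
      module

lemma d_exp (bs : Module.Basis ι ℝ V) (L : Matrix ι ι ℝ) (hL : L.transpose = -L)
    (α : Module.Dual ℝ V) :
    contractLeft (Q := (0 : QuadraticForm ℝ V)) α (expExt (Fintype.card ι) (lamB bs L))
      = ExteriorAlgebra.ι ℝ (mvec bs L α) * expExt (Fintype.card ι) (lamB bs L) := by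
  set N := Fintype.card ι with hN
  rw [expExt, map_sum, Finset.sum_range_succ' _ N]
  have h0 : contractLeft (Q := (0 : QuadraticForm ℝ V)) α
      (((Nat.factorial 0 : ℝ))⁻¹ • lamB bs L ^ 0) = 0 := by
    rw [pow_zero, map_smul]
    simp [CliffordAlgebra.contractLeft_one]
  rw [map_smul] at h0 ⊢
  rw [h0, add_zero]
  have hterm : ∀ n, contractLeft (Q := (0 : QuadraticForm ℝ V)) α
      ((((n+1).factorial : ℝ))⁻¹ • lamB bs L ^ (n+1))
      = (Nat.factorial n : ℝ)⁻¹ • (ExteriorAlgebra.ι ℝ (mvec bs L α) * lamB bs L ^ n) := by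
    intro n
    rw [map_smul, d_lam_pow bs L hL, smul_smul, Nat.factorial_succ]
    congr 1
    have hne : ((n : ℝ) + 1) ≠ 0 := by positivity
    have hfe : (Nat.factorial n : ℝ) ≠ 0 := by
      exact_mod_cast Nat.cast_ne_zero.2 (Nat.factorial_ne_zero n)
    push_cast
    field_simp
  calc ∑ n ∈ Finset.range N, contractLeft (Q := (0 : QuadraticForm ℝ V)) α
        ((((n+1).factorial : ℝ))⁻¹ • lamB bs L ^ (n+1))
      = ∑ n ∈ Finset.range N, (Nat.factorial n : ℝ)⁻¹
          • (ExteriorAlgebra.ι ℝ (mvec bs L α) * lamB bs L ^ n) :=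
        Finset.sum_congr rfl fun n _ => hterm n
    _ = ExteriorAlgebra.ι ℝ (mvec bs L α)
          * ∑ n ∈ Finset.range N, (Nat.factorial n : ℝ)⁻¹ • lamB bs L ^ n := by
        rw [Finset.mul_sum]
        exact Finset.sum_congr rfl fun n _ => (mul_smul_comm _ _ _).symm
    _ = ExteriorAlgebra.ι ℝ (mvec bs L α)
          * ∑ n ∈ Finset.range (N + 1), (Nat.factorial n : ℝ)⁻¹ • lamB bs L ^ n := by
        rw [Finset.sum_range_succ, mul_add, mul_smul_comm,
          ι_mul_lamB_pow_zero bs L _ (by omega), smul_zero, add_zero]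

lemma exp_isUnit (bs : Module.Basis ι ℝ V) (L : Matrix ι ι ℝ) :
    IsUnit (expExt (Fintype.card ι) (lamB bs L)) := by
  set N := Fintype.card ι with hN
  set lam := lamB bs L with hlam
  set w : ExteriorAlgebra ℝ V := ∑ n ∈ Finset.range N, (((n+1).factorial : ℝ))⁻¹ • lam ^ n
    with hw
  have hz : expExt N lam = lam * w + 1 := by
    rw [expExt, Finset.sum_range_succ' _ N]
    congr 1
    · rw [hw, Finset.mul_sum]
      refine Finset.sum_congr rfl fun n _ => ?_
      rw [mul_smul_comm, ← pow_succ']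
    · simp
  have hcomm : Commute lam w := by
    refine Commute.sum_right _ _ _ fun n _ => ?_
    exact ((Commute.refl lam).pow_right n).smul_right _
  have hnil : IsNilpotent (lam * w) := by
    refine ⟨N + 1, ?_⟩
    rw [hcomm.mul_pow, lamB_pow_zero bs L (by omega), zero_mul]
  rw [hz]
  exact hnil.isUnit_add_one

lemma d_mul_exp (bs : Module.Basis ι ℝ V) (L : Matrix ι ι ℝ) (hL : L.transpose = -L)
    (α : Module.Dual ℝ V) (y : ExteriorAlgebra ℝ V) :
    contractLeft (Q := (0 : QuadraticForm ℝ V)) α (y * expExt (Fintype.card ι) (lamB bs L))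
      = ExteriorAlgebra.ι ℝ (mvec bs L α) * (y * expExt (Fintype.card ι) (lamB bs L))
        + contractLeft (Q := (0 : QuadraticForm ℝ V)) α y
          * expExt (Fintype.card ι) (lamB bs L) := by
  set e := expExt (Fintype.card ι) (lamB bs L) with he
  set wv := mvec bs L α with hwv
  induction y using CliffordAlgebra.left_induction with
  | algebraMap r =>
      rw [← Algebra.smul_def, map_smul, d_exp bs L hL, CliffordAlgebra.contractLeft_algebraMap,
        zero_mul, add_zero]
      exact (mul_smul_comm _ _ _).symm
  | add x y hx hy =>
      rw [add_mul, map_add, hx, hy, map_add, add_mul, mul_add]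
      abel
  | ι_mul y u hy =>
      have hswap : ∀ z : ExteriorAlgebra ℝ V,
          ExteriorAlgebra.ι ℝ u * (ExteriorAlgebra.ι ℝ wv * z)
            = -(ExteriorAlgebra.ι ℝ wv * (ExteriorAlgebra.ι ℝ u * z)) := by
        intro z
        rw [← mul_assoc, my_swap u wv, neg_mul, mul_assoc]
      rw [mul_assoc, CliffordAlgebra.contractLeft_ι_mul, hy, mul_add, hswap,
        CliffordAlgebra.contractLeft_ι_mul, sub_mul, smul_mul_assoc, ← mul_assoc,
        ← mul_assoc]
      simp only [mul_assoc]
      abel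

noncomputable def mEquiv [FiniteDimensional ℝ V] (B : LinearMap.BilinForm ℝ V)
    (hB : B.Nondegenerate) (bs : Module.Basis ι ℝ V) (L : Matrix ι ι ℝ) (hLu : IsUnit L) :
    V ≃ₗ[ℝ] V :=
  (B.toDual hB).trans ((bs.dualBasis.equivFun).trans
    (((Matrix.toLinearEquiv' L.transpose
      (Matrix.invertibleOfIsUnitDet _ (by
        rw [Matrix.det_transpose]
        exact (Matrix.isUnit_iff_isUnit_det L).1 hLu))).trans
      bs.equivFun.symm)))

lemma mEquiv_apply [FiniteDimensional ℝ V] (B : LinearMap.BilinForm ℝ V)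
    (hB : B.Nondegenerate) (bs : Module.Basis ι ℝ V) (L : Matrix ι ι ℝ) (hLu : IsUnit L) (v : V) :
    mEquiv B hB bs L hLu v = mvec bs L (B v) := by
  rw [mEquiv, mvec]
  simp only [LinearEquiv.trans_apply, Module.Basis.equivFun_symm_apply, Matrix.toLinearEquiv'_apply]
  refine Finset.sum_congr rfl fun b _ => ?_
  congr 1
  rw [show (L.transpose.toLinearEquiv' (Matrix.invertibleOfIsUnitDet _ (by
        rw [Matrix.det_transpose]
        exact (Matrix.isUnit_iff_isUnit_det L).1 hLu)))
        (bs.dualBasis.equivFun ((B.toDual hB) v))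
      = Matrix.toLin' L.transpose (bs.dualBasis.equivFun ((B.toDual hB) v)) from rfl,
    Matrix.toLin'_apply]
  simp only [Matrix.mulVec, dotProduct, Matrix.transpose_apply]
  refine Finset.sum_congr rfl fun a _ => ?_
  congr 1
  rw [Module.Basis.dualBasis_equivFun]
  exact LinearMap.BilinForm.toDual_def hB

lemma sum_antisym_zero (L : Matrix ι ι ℝ) (hL : L.transpose = -L) (x : ι → ℝ) :
    ∑ b, (∑ a, L a b * x a) * x b = 0 := by
  have hLs : ∀ a b, L a b = -L b a := by
    intro a b
    have h := congrFun (congrFun hL b) a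
    simp only [Matrix.transpose_apply, Matrix.neg_apply] at h
    linarith
  have hexp : ∑ b, (∑ a, L a b * x a) * x b = ∑ b, ∑ a, L a b * x a * x b := by
    exact Finset.sum_congr rfl fun b _ => Finset.sum_mul _ _ _
  have hneg : ∑ b, ∑ a, L a b * x a * x b = -∑ b, ∑ a, L a b * x a * x b := by
    calc ∑ b, ∑ a, L a b * x a * x b = ∑ b, ∑ a, L b a * x b * x a := Finset.sum_comm
      _ = ∑ b, ∑ a, -(L a b * x a * x b) := by
          refine Finset.sum_congr rfl fun b _ => Finset.sum_congr rfl fun a _ => ?_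
          rw [hLs b a]
          ring
      _ = -∑ b, ∑ a, L a b * x a * x b := by simp [Finset.sum_neg_distrib]
  rw [hexp]
  linarith


lemma contractionMap_ι (B : LinearMap.BilinForm ℝ V) (v : V) :
    contractionMap B (ExteriorAlgebra.ι ℝ v)
      = CliffordAlgebra.contractLeft (Q := (0 : QuadraticForm ℝ V)) (B v) :=
  CliffordAlgebra.lift_ι_apply _ _ v


variable [FiniteDimensional ℝ V]

noncomputable def BpForm (B : LinearMap.BilinForm ℝ V) (hB : B.Nondegenerate)
    (bs : Module.Basis ι ℝ V) (L : Matrix ι ι ℝ) (hLu : IsUnit L) : LinearMap.BilinForm ℝ V :=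
  -(B ∘ₗ ((mEquiv B hB bs L hLu).symm.toLinearMap))

lemma BpForm_quad (B : LinearMap.BilinForm ℝ V) (hB : B.Nondegenerate)
    (bs : Module.Basis ι ℝ V) (L : Matrix ι ι ℝ) (hL : L.transpose = -L) (hLu : IsUnit L) :
    (BpForm B hB bs L hLu).toQuadraticMap
      = (0 : QuadraticForm ℝ V) - (0 : QuadraticForm ℝ V) := by
  refine QuadraticMap.ext fun x => ?_
  obtain ⟨v, rfl⟩ := (mEquiv B hB bs L hLu).surjective x
  rw [LinearMap.BilinMap.toQuadraticMap_apply]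
  have h1 : BpForm B hB bs L hLu ((mEquiv B hB bs L hLu) v) = -(B v) := by
    rw [BpForm]
    simp only [LinearMap.neg_apply, LinearMap.comp_apply, LinearEquiv.coe_coe,
      LinearEquiv.symm_apply_apply]
  rw [h1]
  have h2 : (B v) ((mEquiv B hB bs L hLu) v) = 0 := by
    rw [mEquiv_apply B hB bs L hLu v, mvec, map_sum]
    have hterm : ∀ b : ι, (B v) ((∑ a, L a b * (B v) (bs a)) • bs b)
        = (∑ a, L a b * (B v) (bs a)) * (B v) (bs b) := by
      intro b
      rw [map_smul, smul_eq_mul]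
    rw [Finset.sum_congr rfl fun b _ => hterm b]
    exact sum_antisym_zero L hL fun a => (B v) (bs a)
  simp [h2]

/-- the isometry equivalence of the zero quadratic form induced by `mEquiv` -/
noncomputable def mIsom (B : LinearMap.BilinForm ℝ V) (hB : B.Nondegenerate)
    (bs : Module.Basis ι ℝ V) (L : Matrix ι ι ℝ) (hLu : IsUnit L) :
    (0 : QuadraticForm ℝ V).IsometryEquiv (0 : QuadraticForm ℝ V) where
  toLinearEquiv := mEquiv B hB bs L hLu
  map_app' := fun _ => rfl

lemma master_identity (B : LinearMap.BilinForm ℝ V) (hB : B.Nondegenerate)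
    (bs : Module.Basis ι ℝ V) (L : Matrix ι ι ℝ) (hL : L.transpose = -L) (hLu : IsUnit L)
    (β : ExteriorAlgebra ℝ V) :
    contractionMap B β (expExt (Fintype.card ι) (lamB bs L))
      = CliffordAlgebra.changeForm (BpForm_quad B hB bs L hL hLu)
          (CliffordAlgebra.equivOfIsometry (mIsom B hB bs L hLu) β)
        * expExt (Fintype.card ι) (lamB bs L) := by
  induction β using CliffordAlgebra.left_induction with
  | algebraMap r =>
      rw [AlgHom.commutes, Module.algebraMap_end_apply, AlgEquiv.commutes]
      rw [CliffordAlgebra.changeForm_algebraMap]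
      rw [← Algebra.smul_def]
  | add x y hx hy =>
      simp only [map_add, LinearMap.add_apply, hx, hy, add_mul]
  | ι_mul y v hy =>
      have hFι : CliffordAlgebra.equivOfIsometry (mIsom B hB bs L hLu)
            (ExteriorAlgebra.ι ℝ v * y)
          = ExteriorAlgebra.ι ℝ (mEquiv B hB bs L hLu v)
            * CliffordAlgebra.equivOfIsometry (mIsom B hB bs L hLu) y := by
        rw [map_mul]
        congr 1
        rw [CliffordAlgebra.equivOfIsometry_apply, CliffordAlgebra.map_apply_ι]
        rfl
      have hBp : BpForm B hB bs L hLu (mEquiv B hB bs L hLu v) = -(B v) := by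
        rw [BpForm]
        simp only [LinearMap.neg_apply, LinearMap.comp_apply, LinearEquiv.coe_coe,
          LinearEquiv.symm_apply_apply]
      rw [map_mul, Module.End.mul_apply, hy, contractionMap_ι]
      have hstep := d_mul_exp bs L hL (B v)
        (CliffordAlgebra.changeForm (BpForm_quad B hB bs L hL hLu)
          ((CliffordAlgebra.equivOfIsometry (mIsom B hB bs L hLu)) y))
      rw [hstep, hFι, CliffordAlgebra.changeForm_ι_mul, hBp,
        map_neg, LinearMap.neg_apply, sub_neg_eq_add, add_mul, mul_assoc,
        mEquiv_apply B hB bs L hLu v]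


end Aux

/-- If `λ ∈ Λ²V` is a nondegenerate bivector (written `λ = (1/2) Σ L^{ab} e_a ∧ e_b`
with `L` an invertible antisymmetric coefficient matrix in a basis `e_a`), then for
every `α ∈ ΛV` there is a unique `β ∈ ΛV` with `ι_β exp(λ) = α`; here `ι` is contraction
of `ΛV` against itself via a fixed nondegenerate bilinear form `B`. -/
theorem contraction_exp_bijective {ι : Type*} [Fintype ι] [DecidableEq ι]
    [FiniteDimensional ℝ V]
    (B : LinearMap.BilinForm ℝ V) (hB : B.Nondegenerate)
    (bs : Module.Basis ι ℝ V) (L : Matrix ι ι ℝ) (hL : L.transpose = -L) (hLu : IsUnit L) :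
    ∀ α : ExteriorAlgebra ℝ V, ∃! β : ExteriorAlgebra ℝ V,
      contractionMap B β (expExt (Fintype.card ι) ((2 : ℝ)⁻¹ • ∑ a, ∑ b,
        L a b • (ExteriorAlgebra.ι ℝ (bs a) * ExteriorAlgebra.ι ℝ (bs b)))) = α := by
  have hbij : Function.Bijective
      (fun β => contractionMap B β (expExt (Fintype.card ι) (lamB bs L))) := by
    have hfun : (fun β => contractionMap B β (expExt (Fintype.card ι) (lamB bs L)))
        = (fun y => y * expExt (Fintype.card ι) (lamB bs L)) ∘
          (CliffordAlgebra.changeForm (BpForm_quad B hB bs L hL hLu)) ∘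
          (CliffordAlgebra.equivOfIsometry (mIsom B hB bs L hLu)) := by
      funext β
      exact master_identity B hB bs L hL hLu β
    rw [hfun]
    refine (Function.Bijective.comp ?_ (Function.Bijective.comp ?_ (AlgEquiv.bijective _)))
    · obtain ⟨u, hu⟩ := exp_isUnit bs L
      constructor
      · intro x y hxy
        have h2 := congrArg (fun z => z * (↑u⁻¹ : ExteriorAlgebra ℝ V)) hxy
        simpa [← hu, mul_assoc] using h2
      · intro z
        exact ⟨z * ↑u⁻¹, by simp [← hu, mul_assoc]⟩
    · have he : ⇑(CliffordAlgebra.changeFormEquiv (BpForm_quad B hB bs L hL hLu))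
          = ⇑(CliffordAlgebra.changeForm (BpForm_quad B hB bs L hL hLu)) :=
        funext fun x => CliffordAlgebra.changeFormEquiv_apply _ x
      rw [← he]
      exact (CliffordAlgebra.changeFormEquiv _).bijective
  intro α
  exact hbij.existsUnique α

end
end
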